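/- arXiv:2506.07846 — 6 statements merged into one kernel-verified Lean document; each statement's English description precedes it below -/
import Mathlib

section
/- Let C be a linear [n,k,d] code over F_q with k ≥ 2 and let a be a codeword of C of minimum weight d. Then the residual code Res(C,a), obtained by puncturing C at the support of a, is a linear code of length n−d, dimension k−1, and minimum distance at least ⌈d/q⌉. -/
/-- Hamming weight of a vector. -/
noncomputable def wt {ι F : Type*} [Zero F] (c : ι → F) : ℕ :=
  Nat.card {i // c i ≠ 0}

/-- Griesmer sum `g_q(k,d) = ∑_{i<k} ⌈d / q^i⌉` (using `(d + q^i - 1)/q^i`). -/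
def gbound (q k d : ℕ) : ℕ :=
  ∑ i ∈ Finset.range k, (d + q ^ i - 1) / q ^ i

open Finset

lemma wt_card {ι F : Type*} [Fintype ι] [Zero F] (c : ι → F)
    [DecidablePred fun i => c i ≠ 0] :
    wt c = (Finset.univ.filter fun i => c i ≠ 0).card := by
  rw [wt, Nat.card_eq_fintype_card, Fintype.card_subtype]

lemma key_mult {F : Type*} [Field F] {n d : ℕ}
    (C : Submodule F (Fin n → F))
    (hmin : ∀ c ∈ C, c ≠ 0 → d ≤ wt c)
    {a : Fin n → F} (haC : a ∈ C) (haw : wt a = d) (ha : a ≠ 0)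
    {c : Fin n → F} (hc : c ∈ C) (hsupp : ∀ i, a i = 0 → c i = 0) :
    ∃ l : F, c = l • a := by
  classical
  obtain ⟨i₀, hi₀⟩ : ∃ i, a i ≠ 0 := by
    by_contra h; push_neg at h; exact ha (funext h)
  refine ⟨c i₀ / a i₀, ?_⟩
  set l := c i₀ / a i₀ with hl
  by_contra hne
  have hb : c - l • a ∈ C := C.sub_mem hc (C.smul_mem l haC)
  have hbne : c - l • a ≠ 0 := fun h => hne (by rwa [sub_eq_zero] at h)
  have hd := hmin _ hb hbne
  have hlt : wt (c - l • a) < wt a := by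
    rw [wt_card, wt_card]
    apply Finset.card_lt_card
    constructor
    · intro i hi
      simp only [Finset.mem_filter, Finset.mem_univ, true_and, Pi.sub_apply,
        Pi.smul_apply, smul_eq_mul] at *
      intro hai
      exact hi (by simp [hsupp i hai, hai])
    · intro hsub
      have h0 := hsub (by simp [hi₀] : i₀ ∈ Finset.univ.filter fun i => a i ≠ 0)
      simp only [Finset.mem_filter, Finset.mem_univ, true_and, Pi.sub_apply,
        Pi.smul_apply, smul_eq_mul] at h0
      exact h0 (by rw [hl, div_mul_cancel₀ _ hi₀, sub_self])
  omega

theorem stmt0 {F : Type*} [Field F] [Fintype F] {n k d : ℕ}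
    (C : Submodule F (Fin n → F))
    (hk : Module.finrank F C = k) (hk2 : 2 ≤ k)
    (hmin : ∀ c ∈ C, c ≠ 0 → d ≤ wt c)
    (hex : ∃ c ∈ C, c ≠ 0 ∧ wt c = d)
    (a : Fin n → F) (haC : a ∈ C) (haw : wt a = d) :
    Nat.card {i : Fin n // a i = 0} = n - d ∧
    Module.finrank F
      (C.map (LinearMap.funLeft F F (Subtype.val : {i : Fin n // a i = 0} → Fin n))) = k - 1 ∧
    ∀ c' ∈ C.map (LinearMap.funLeft F F (Subtype.val : {i : Fin n // a i = 0} → Fin n)),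
      c' ≠ 0 → (d + Fintype.card F - 1) / Fintype.card F ≤ wt c' := by
  classical
  set q := Fintype.card F with hq
  have hq1 : 1 ≤ q := Fintype.card_pos
  -- d ≥ 1 and a ≠ 0
  obtain ⟨c₀, hc₀C, hc₀ne, hc₀w⟩ := hex
  have hd1 : 1 ≤ d := by
    rw [← hc₀w, wt]
    obtain ⟨i, hi⟩ := Function.ne_iff.mp hc₀ne
    have : Nonempty {i // c₀ i ≠ 0} := ⟨⟨i, hi⟩⟩
    exact Nat.card_pos
  have ha : a ≠ 0 := by
    intro h
    rw [h] at haw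
    have : wt (0 : Fin n → F) = 0 := by
      have : IsEmpty {i : Fin n // (0 : Fin n → F) i ≠ 0} := ⟨fun ⟨i, hi⟩ => hi rfl⟩
      simp [wt, Nat.card_eq_zero, this]
    omega
  -- Part 1
  have hA : (Finset.univ.filter fun i : Fin n => a i ≠ 0).card = d := by
    rw [← haw, wt_card]
  have h1 : Nat.card {i : Fin n // a i = 0} = n - d := by
    rw [Nat.card_eq_fintype_card, Fintype.card_subtype]
    have h2 := Finset.card_filter_add_card_filter_not
      (s := (Finset.univ : Finset (Fin n))) (p := fun i : Fin n => a i = 0)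
    simp only [Finset.card_univ, Fintype.card_fin] at h2
    have h3 : (Finset.univ.filter fun i : Fin n => ¬ a i = 0).card = d := hA
    omega
  -- Part 2
  set π : (Fin n → F) →ₗ[F] ({i : Fin n // a i = 0} → F) :=
    LinearMap.funLeft F F Subtype.val with hπ
  have hπa : π a = 0 := by
    funext j
    exact j.prop
  have hker : LinearMap.ker (π.domRestrict C) = (F ∙ (⟨a, haC⟩ : C)) := by
    ext ⟨x, hx⟩
    simp only [LinearMap.mem_ker, LinearMap.domRestrict_apply, Submodule.mem_span_singleton]
    constructor
    · intro hx0
      have hsupp : ∀ i, a i = 0 → x i = 0 := fun i hai => congrFun hx0 ⟨i, hai⟩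
      obtain ⟨l, hl⟩ := key_mult C hmin haC haw ha hx hsupp
      exact ⟨l, Subtype.ext (by simpa using hl.symm)⟩
    · rintro ⟨l, hl⟩
      have hx' : x = l • a := by
        have := congrArg Subtype.val hl
        simpa using this.symm
      rw [hx', map_smul, hπa, smul_zero]
  have hfr : Module.finrank F (LinearMap.ker (π.domRestrict C)) = 1 := by
    rw [hker]
    exact finrank_span_singleton (fun h => ha (congrArg Subtype.val h))
  have hrange : LinearMap.range (π.domRestrict C) = C.map π := by
    ext y
    simp [LinearMap.mem_range, Submodule.mem_map, LinearMap.domRestrict_apply,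
      Subtype.exists]
  have hrn := LinearMap.finrank_range_add_finrank_ker (π.domRestrict C)
  rw [hrange, hfr, hk] at hrn
  refine ⟨h1, by omega, ?_⟩
  -- Part 3
  rintro c' ⟨c, hcC, rfl⟩ hc'ne
  set W := Finset.univ.filter (fun i : Fin n => a i = 0 ∧ c i ≠ 0) with hW
  have hw : wt (π c) = W.card := by
    rw [wt]
    have e1 : {j : {i : Fin n // a i = 0} // π c j ≠ 0} ≃ {i : Fin n // a i = 0 ∧ c i ≠ 0} :=
      Equiv.subtypeSubtypeEquivSubtypeInter (fun i : Fin n => a i = 0) (fun i => c i ≠ 0)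
    rw [Nat.card_congr e1, Nat.card_eq_fintype_card, Fintype.card_subtype, hW]
  set A := Finset.univ.filter (fun i : Fin n => a i ≠ 0) with hAdef
  have hstep : ∀ l : F, d ≤ W.card + (A.filter fun i => ¬ c i = l * a i).card := by
    intro l
    have hmem : c - l • a ∈ C := C.sub_mem hcC (C.smul_mem l haC)
    have hne : c - l • a ≠ 0 := by
      intro h
      apply hc'ne
      have hcl : c = l • a := by rwa [sub_eq_zero] at h
      rw [hcl]
      show π (l • a) = 0
      rw [map_smul, hπa, smul_zero]
    have hd := hmin _ hmem hne
    have hsub : (Finset.univ.filter fun i => (c - l • a) i ≠ 0) ⊆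
        W ∪ (A.filter fun i => ¬ c i = l * a i) := by
      intro i hi
      simp only [Finset.mem_filter, Finset.mem_univ, true_and, Pi.sub_apply,
        Pi.smul_apply, smul_eq_mul] at hi
      rw [Finset.mem_union]
      by_cases hai : a i = 0
      · left
        rw [hW, Finset.mem_filter]
        refine ⟨Finset.mem_univ _, hai, fun hci => hi (by simp [hci, hai])⟩
      · right
        rw [hAdef, Finset.mem_filter, Finset.mem_filter]
        exact ⟨⟨Finset.mem_univ _, hai⟩, fun hci => hi (by simp [hci])⟩
    calc d ≤ wt (c - l • a) := hd
      _ = _ := wt_card _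
      _ ≤ (W ∪ (A.filter fun i => ¬ c i = l * a i)).card := Finset.card_le_card hsub
      _ ≤ W.card + (A.filter fun i => ¬ c i = l * a i).card := Finset.card_union_le _ _
  have hsum1 : ∑ l : F, (A.filter fun i => c i = l * a i).card = d := by
    have hcf : ∀ l : F, (A.filter fun i => c i = l * a i).card
        = ∑ i ∈ A, if c i = l * a i then 1 else 0 := fun l => Finset.card_filter _ _
    simp_rw [hcf]
    rw [Finset.sum_comm]
    have hinner : ∀ i ∈ A, (∑ l : F, if c i = l * a i then 1 else 0) = 1 := by
      intro i hi
      have hai : a i ≠ 0 := by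
        rw [hAdef, Finset.mem_filter] at hi
        exact hi.2
      have hcond : ∀ l : F, (c i = l * a i) ↔ (l = c i * (a i)⁻¹) := by
        intro l
        rw [eq_mul_inv_iff_mul_eq₀ hai]
        exact eq_comm
      simp_rw [hcond]
      simp
    rw [Finset.sum_congr rfl hinner]
    simp [hA]
  have hsum2 : ∀ l : F, (A.filter fun i => c i = l * a i).card
      + (A.filter fun i => ¬ c i = l * a i).card = d := by
    intro l
    rw [Finset.card_filter_add_card_filter_not]
    exact hA
  set S2 := ∑ l : F, (A.filter fun i => ¬ c i = l * a i).card with hS2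
  have htot : d + S2 = q * d := by
    have h : ∑ l : F, ((A.filter fun i => c i = l * a i).card
          + (A.filter fun i => ¬ c i = l * a i).card) = q * d := by
      calc ∑ l : F, ((A.filter fun i => c i = l * a i).card
            + (A.filter fun i => ¬ c i = l * a i).card)
          = ∑ _l : F, d := Finset.sum_congr rfl fun l _ => hsum2 l
        _ = q * d := by rw [Finset.sum_const, Finset.card_univ, smul_eq_mul, hq]
    rw [Finset.sum_add_distrib, hsum1, ← hS2] at h
    exact h
  have hQ : q * d ≤ q * W.card + S2 := by
    calc q * d = ∑ _l : F, d := by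
          rw [Finset.sum_const, Finset.card_univ, smul_eq_mul, hq]
      _ ≤ ∑ l : F, (W.card + (A.filter fun i => ¬ c i = l * a i).card) :=
          Finset.sum_le_sum fun l _ => hstep l
      _ = q * W.card + S2 := by
          rw [Finset.sum_add_distrib, Finset.sum_const, Finset.card_univ, smul_eq_mul, hq, hS2]
  have hdqW : d ≤ q * W.card := by linarith
  rw [hw]
  have hle : d + (q - 1) ≤ q * W.card + (q - 1) := Nat.add_le_add_right hdqW _
  have hdiv : (q * W.card + (q - 1)) / q = W.card := by
    rw [Nat.mul_add_div (by omega), Nat.div_eq_of_lt (by omega), add_zero]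
  calc (d + q - 1) / q = (d + (q - 1)) / q := by congr 1; omega
    _ ≤ (q * W.card + (q - 1)) / q := Nat.div_le_div_right hle
    _ = W.card := hdiv
end

section
/- For every linear [n,k,d] code over F_q, the length satisfies n ≥ Σ_{i=0}^{k-1} ⌈d/q^i⌉ (the Griesmer bound). -/
open Finset
open scoped Classical

lemma cd_le_iff {a b c : ℕ} (hb : 0 < b) : (a + b - 1) / b ≤ c ↔ a ≤ c * b := by
  rw [Nat.div_le_iff_le_mul_add_pred hb, Nat.mul_comm]
  omega

lemma cd_comp {a b : ℕ} (ha : 0 < a) (hb : 0 < b) (d : ℕ) :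
    ((d + a - 1) / a + b - 1) / b = (d + a * b - 1) / (a * b) := by
  have hab : 0 < a * b := Nat.mul_pos ha hb
  have h1 : ∀ c, ((d + a - 1) / a + b - 1) / b ≤ c ↔ d ≤ c * (a * b) := fun c => by
    rw [cd_le_iff hb, cd_le_iff ha, mul_assoc, mul_comm b a]
  exact Nat.le_antisymm ((h1 _).mpr ((cd_le_iff hab).mp le_rfl))
    ((cd_le_iff hab).mpr ((h1 _).mp le_rfl))

lemma cd_mono {b d d' : ℕ} (h : d ≤ d') : (d + b - 1) / b ≤ (d' + b - 1) / b :=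
  Nat.div_le_div_right (by omega)

lemma gbound_mono {q k d d' : ℕ} (h : d ≤ d') : gbound q k d ≤ gbound q k d' :=
  Finset.sum_le_sum fun _ _ => cd_mono h

lemma gbound_succ {q k d : ℕ} (hq : 0 < q) :
    gbound q (k + 1) d = d + gbound q k ((d + q - 1) / q) := by
  rw [gbound, Finset.sum_range_succ']
  simp only [pow_zero, Nat.add_sub_cancel, Nat.div_one, gbound]
  rw [Nat.add_comm]
  congr 1
  refine Finset.sum_congr rfl fun i _ => ?_
  rw [cd_comp hq (pow_pos hq i) d, ← pow_succ']

lemma wt_eq_card {ι F : Type*} [Fintype ι] [Zero F] (c : ι → F) :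
    wt c = (Finset.univ.filter (fun i => c i ≠ 0)).card := by
  simp [wt, Nat.card_eq_fintype_card, Fintype.card_subtype]

theorem stmt1 {F : Type*} [Field F] [Fintype F] {n k d : ℕ}
    (C : Submodule F (Fin n → F))
    (hk : Module.finrank F C = k)
    (hmin : ∀ c ∈ C, c ≠ 0 → d ≤ wt c)
    (hex : ∃ c ∈ C, c ≠ 0 ∧ wt c = d) :
    gbound (Fintype.card F) k d ≤ n := by
  induction k generalizing n d C with
  | zero => simp [gbound]
  | succ k ih =>
    set q := Fintype.card F with hq
    have hq1 : 1 < q := Fintype.one_lt_card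
    have hq0 : 0 < q := by omega
    obtain ⟨c, hcC, hc0, hcd⟩ := hex
    set S : Finset (Fin n) := Finset.univ.filter (fun i => c i ≠ 0) with hSdef
    have hScard : S.card = d := by rw [← hcd, wt_eq_card]
    have hd1 : 1 ≤ d := by
      rcases Function.ne_iff.mp hc0 with ⟨i, hi⟩
      have hiS : i ∈ S := Finset.mem_filter.mpr ⟨Finset.mem_univ i, by simpa using hi⟩
      have := Finset.card_pos.mpr ⟨i, hiS⟩
      omega
    have hdn : d ≤ n := by
      rw [← hScard]
      simpa using Finset.card_le_card (Finset.subset_univ S)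
    set m := n - d with hm
    have hT : (Sᶜ).card = m := by rw [Finset.card_compl, hScard]; simp [hm]
    have e : Fin m ≃ {i // i ∈ Sᶜ} := (Fintype.equivFinOfCardEq (by rw [Fintype.card_coe]; exact hT)).symm
    set π : (Fin n → F) →ₗ[F] (Fin m → F) :=
      LinearMap.funLeft F F (fun j => (e j : Fin n)) with hπ
    have hπapp : ∀ (x : Fin n → F) j, π x j = x (e j) := fun x j => rfl
    have hvanish : ∀ x : Fin n → F, π x = 0 → ∀ i ∉ S, x i = 0 := by
      intro x hx i hi
      have h2 : π x (e.symm ⟨i, Finset.mem_compl.mpr hi⟩) = 0 := by rw [hx]; rfl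
      rwa [hπapp, Equiv.apply_symm_apply] at h2
    have hπc : π c = 0 := by
      funext j
      have h3 := (e j).2
      simp only [Finset.mem_compl, hSdef, Finset.mem_filter, Finset.mem_univ, true_and,
        not_not] at h3
      simpa [hπapp] using h3
    have hker : ∀ x ∈ C, π x = 0 → ∃ α : F, x = α • c := by
      intro x hxC hx
      obtain ⟨i0, hi0S⟩ : S.Nonempty := Finset.card_pos.mp (by omega)
      have hci0 : c i0 ≠ 0 := by
        simpa [hSdef] using hi0S
      set α := x i0 * (c i0)⁻¹ with hα
      set z : Fin n → F := x - α • c with hz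
      have hzC : z ∈ C := C.sub_mem hxC (C.smul_mem α hcC)
      have hzi0 : z i0 = 0 := by
        simp only [hz, hα, Pi.sub_apply, Pi.smul_apply, smul_eq_mul]
        field_simp
        simp
      have hsub : Finset.univ.filter (fun i => z i ≠ 0) ⊆ S.erase i0 := by
        intro i hi
        simp only [Finset.mem_filter, Finset.mem_univ, true_and] at hi
        rw [Finset.mem_erase]
        constructor
        · rintro rfl; exact hi hzi0
        · by_contra hiS
          have hxi := hvanish x hx i hiS
          have hci : c i = 0 := by
            by_contra h
            exact hiS (by simp [hSdef, h])
          exact hi (by simp [hz, hxi, hci])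
      have hwtz : wt z < d := by
        rw [wt_eq_card]
        calc (Finset.univ.filter (fun i => z i ≠ 0)).card ≤ (S.erase i0).card :=
              Finset.card_le_card hsub
          _ < d := by rw [Finset.card_erase_of_mem hi0S]; omega
      have hz0 : z = 0 := by
        by_contra h
        have := hmin z hzC h
        omega
      exact ⟨α, by rwa [← sub_eq_zero]⟩
    set C' := C.map π with hC'
    have hcc : (⟨c, hcC⟩ : C) ≠ 0 := fun h => hc0 (congrArg Subtype.val h)
    have hkerEq : LinearMap.ker (π ∘ₗ C.subtype) = Submodule.span F {(⟨c, hcC⟩ : C)} := by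
      ext x
      rw [Submodule.mem_span_singleton, LinearMap.mem_ker]
      constructor
      · intro hx
        obtain ⟨α, hα⟩ := hker x x.2 hx
        exact ⟨α, by ext i; simp [hα]⟩
      · rintro ⟨α, rfl⟩
        have : (↑(α • (⟨c, hcC⟩ : C)) : Fin n → F) = α • c := rfl
        simp [this, map_smul, hπc]
    have hrank : Module.finrank F C' = k := by
      have h1 := LinearMap.finrank_range_add_finrank_ker (π ∘ₗ C.subtype)
      rw [LinearMap.range_comp, Submodule.range_subtype, hkerEq,
        finrank_span_singleton hcc, hk] at h1
      rw [hC']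
      omega
    -- the counting argument
    have hcount : ∀ y ∈ C, π y ≠ 0 → d ≤ q * wt (π y) := by
      intro y hyC hy0
      have hznz : ∀ α : F, y - α • c ≠ 0 := by
        intro α h
        apply hy0
        have hy : y = α • c := by rwa [sub_eq_zero] at h
        rw [hy, map_smul, hπc, smul_zero]
      have hzwt : ∀ α : F, d ≤ wt (y - α • c) := fun α =>
        hmin _ (C.sub_mem hyC (C.smul_mem α hcC)) (hznz α)
      have hsum : q * d ≤ ∑ α : F, wt (y - α • c) := by
        calc q * d = ∑ _α : F, d := by rw [Finset.sum_const, Finset.card_univ, smul_eq_mul]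
          _ ≤ _ := Finset.sum_le_sum fun α _ => hzwt α
      have hwtπ : (Sᶜ.filter (fun i => y i ≠ 0)).card = wt (π y) := by
        rw [wt_eq_card]
        refine (Finset.card_bij (fun j _ => (e j : Fin n)) ?_ ?_ ?_).symm
        · intro j hj
          simp only [Finset.mem_filter, Finset.mem_univ, true_and] at hj ⊢
          refine ⟨(e j).2, ?_⟩
          rwa [hπapp] at hj
        · intro j1 h1 j2 h2 hj
          exact e.injective (Subtype.ext hj)
        · intro i hi
          simp only [Finset.mem_filter] at hi
          refine ⟨e.symm ⟨i, hi.1⟩, ?_, by simp⟩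
          simp only [Finset.mem_filter, Finset.mem_univ, true_and, hπapp]
          rw [Equiv.apply_symm_apply]
          exact hi.2
      have hsplit : ∀ α : F, wt (y - α • c) =
          (S.filter (fun i => y i - α * c i ≠ 0)).card
            + (Sᶜ.filter (fun i => y i ≠ 0)).card := by
        intro α
        rw [wt_eq_card]
        have huniv : (Finset.univ : Finset (Fin n)) = S ∪ Sᶜ := (Finset.union_compl S).symm
        rw [huniv, Finset.filter_union,
          Finset.card_union_of_disjoint
            (Finset.disjoint_filter_filter disjoint_compl_right)]
        congr 1
        refine congrArg Finset.card (Finset.filter_congr fun i hi => ?_)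
        have hci : c i = 0 := by
          have h2 := Finset.mem_compl.mp hi
          by_contra h
          exact h2 (by simp [hSdef, h])
        simp [Pi.sub_apply, Pi.smul_apply, smul_eq_mul, hci]
      have hScount : ∀ i ∈ S, (Finset.univ.filter (fun α : F => y i - α * c i ≠ 0)).card
          = q - 1 := by
        intro i hi
        have hci : c i ≠ 0 := by simpa [hSdef] using hi
        have hone : (Finset.univ.filter (fun α : F => ¬(y i - α * c i ≠ 0))) =
            {y i * (c i)⁻¹} := by
          ext α
          simp only [Finset.mem_filter, Finset.mem_univ, true_and, not_not,
            Finset.mem_singleton, sub_eq_zero]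
          rw [eq_mul_inv_iff_mul_eq₀ hci, eq_comm]
        have htot := Finset.card_filter_add_card_filter_not
          (s := (Finset.univ : Finset F)) (p := fun α : F => y i - α * c i ≠ 0)
        rw [hone] at htot
        simp only [Finset.card_singleton, Finset.card_univ] at htot
        omega
      have hsum2 : ∑ α : F, wt (y - α • c) = (q - 1) * d + q * wt (π y) := by
        calc ∑ α : F, wt (y - α • c)
            = ∑ α : F, ((S.filter (fun i => y i - α * c i ≠ 0)).card
              + (Sᶜ.filter (fun i => y i ≠ 0)).card) := Finset.sum_congr rfl fun α _ => hsplit α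
          _ = (∑ α : F, (S.filter (fun i => y i - α * c i ≠ 0)).card) + q * wt (π y) := by
              rw [Finset.sum_add_distrib, Finset.sum_const, Finset.card_univ, smul_eq_mul, hwtπ]
          _ = (q - 1) * d + q * wt (π y) := by
              congr 1
              calc ∑ α : F, (S.filter (fun i => y i - α * c i ≠ 0)).card
                  = ∑ α : F, ∑ i ∈ S, if y i - α * c i ≠ 0 then 1 else 0 := by
                    refine Finset.sum_congr rfl fun α _ => ?_
                    rw [Finset.card_filter]
                _ = ∑ i ∈ S, ∑ α : F, if y i - α * c i ≠ 0 then 1 else 0 := Finset.sum_comm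
                _ = ∑ i ∈ S, (q - 1) := by
                    refine Finset.sum_congr rfl fun i hi => ?_
                    rw [← Finset.card_filter]
                    exact hScount i hi
                _ = (q - 1) * d := by rw [Finset.sum_const, hScard, smul_eq_mul, mul_comm]
      have key : (q - 1) * d + d = q * d := by
        calc (q - 1) * d + d = ((q - 1) + 1) * d := by rw [add_mul, one_mul]
          _ = q * d := by rw [Nat.sub_add_cancel hq0]
      rw [hsum2] at hsum
      omega
    -- assemble
    rw [gbound_succ hq0]
    by_cases hk0 : k = 0
    · subst hk0
      simp only [gbound, Finset.range_zero, Finset.sum_empty, add_zero]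
      exact hdn
    · have hC'bot : C' ≠ ⊥ := by
        intro h
        rw [h, finrank_bot] at hrank
        exact hk0 hrank.symm
      obtain ⟨y', hy'C, hy'0⟩ := Submodule.exists_mem_ne_zero_of_ne_bot hC'bot
      set W := {w : ℕ | ∃ z ∈ C', z ≠ 0 ∧ wt z = w} with hW
      have hWne : W.Nonempty := ⟨wt y', y', hy'C, hy'0, rfl⟩
      set d' := sInf W with hd'def
      obtain ⟨y0, hy0C, hy00, hy0w⟩ := Nat.sInf_mem hWne
      have hmin' : ∀ z ∈ C', z ≠ 0 → d' ≤ wt z := fun z hz hz0 =>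
        Nat.sInf_le ⟨z, hz, hz0, rfl⟩
      have ihres := ih C' hrank hmin' ⟨y0, hy0C, hy00, hy0w⟩
      have hd' : (d + q - 1) / q ≤ d' := by
        rw [cd_le_iff hq0]
        obtain ⟨y, hyC, rfl⟩ := hy0C
        have := hcount y hyC hy00
        rw [hy0w] at this
        exact le_trans this (le_of_eq (mul_comm q d'))
      calc d + gbound q k ((d + q - 1) / q) ≤ d + gbound q k d' :=
            add_le_add_right (gbound_mono hd') d
        _ ≤ d + (n - d) := add_le_add_right ihres d
        _ = n := by omega
end

section
/- Let C be a Griesmer [g_q(k,d),k,d] code over F_q with q^{k−1} dividing d. Then every nonzero codeword of C has weight exactly d. -/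
lemma geom_nat (q k : ℕ) (hq : 1 ≤ q) :
    ∑ j ∈ Finset.range k, q ^ j * (q - 1) = q ^ k - 1 := by
  obtain ⟨p, rfl⟩ : ∃ p, q = p + 1 := ⟨q - 1, by omega⟩
  induction k with
  | zero => simp
  | succ k ih =>
    rw [Finset.sum_range_succ, ih]
    have h1 : 1 ≤ (p + 1) ^ k := Nat.one_le_pow _ _ (by omega)
    have h2 : (p + 1) ^ (k + 1) = (p + 1) ^ k * p + (p + 1) ^ k := by ring
    simp only [Nat.add_sub_cancel]
    omega

theorem stmt7 {F : Type*} [Field F] [Fintype F] {n k d : ℕ}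
    (C : Submodule F (Fin n → F))
    (hk : Module.finrank F C = k)
    (hn : n = gbound (Fintype.card F) k d)
    (hmin : ∀ c ∈ C, c ≠ 0 → d ≤ wt c)
    (hex : ∃ c ∈ C, c ≠ 0 ∧ wt c = d)
    (hd : Fintype.card F ^ (k - 1) ∣ d) :
    ∀ c ∈ C, c ≠ 0 → wt c = d := by
  classical
  haveI : Fintype C := Fintype.ofFinite C
  set q := Fintype.card F with hq
  have hq2 : 2 ≤ q := Fintype.one_lt_card
  have hcard : Fintype.card C = q ^ k := by
    rw [Module.card_eq_pow_finrank (K := F) (V := C), hk]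
  -- wt as a filter card
  have hwt : ∀ v : Fin n → F, wt v = (Finset.univ.filter (fun i => v i ≠ 0)).card := by
    intro v
    rw [wt, Nat.card_eq_fintype_card, Fintype.card_subtype]
  have hwtpos : ∀ v : Fin n → F, v ≠ 0 → 0 < wt v := by
    intro v hv
    obtain ⟨i, hi⟩ := Function.ne_iff.mp hv
    rw [hwt]
    exact Finset.card_pos.mpr ⟨i, by simpa using hi⟩
  -- k ≥ 1 and d ≥ 1
  have hk1 : 1 ≤ k := by
    by_contra h
    obtain ⟨e, heC, he0, -⟩ := hex
    have hk0 : k = 0 := by omega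
    have h1 : Fintype.card C ≤ 1 := by rw [hcard, hk0]; simp
    have := Fintype.card_le_one_iff.mp h1 ⟨e, heC⟩ ⟨0, C.zero_mem⟩
    exact he0 (congrArg Subtype.val this)
  have hd1 : 1 ≤ d := by
    obtain ⟨e, heC, he0, hewt⟩ := hex
    have := hwtpos e he0
    omega
  -- per-coordinate bound
  have hcoord : ∀ i : Fin n,
      (Finset.univ.filter (fun v : C => (v : Fin n → F) i ≠ 0)).card ≤ q ^ k - q ^ (k - 1) := by
    intro i
    set f : C →ₗ[F] F := (LinearMap.proj i).comp C.subtype with hf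
    have hker : q ^ (k - 1) ≤ Fintype.card (LinearMap.ker f) := by
      have hrk : Module.finrank F (LinearMap.range f) + Module.finrank F (LinearMap.ker f)
          = Module.finrank F C := LinearMap.finrank_range_add_finrank_ker f
      have hr1 : Module.finrank F (LinearMap.range f) ≤ 1 := by
        calc Module.finrank F (LinearMap.range f) ≤ Module.finrank F F :=
              (LinearMap.range f).finrank_le
          _ = 1 := Module.finrank_self F
      have hkerrk : k - 1 ≤ Module.finrank F (LinearMap.ker f) := by omega
      calc q ^ (k - 1) ≤ q ^ Module.finrank F (LinearMap.ker f) :=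
            Nat.pow_le_pow_right (by omega) hkerrk
        _ = Fintype.card (LinearMap.ker f) := by
          rw [eq_comm]; convert Module.card_eq_pow_finrank (K := F) (V := LinearMap.ker f)
    have hkc : Fintype.card (LinearMap.ker f)
        = (Finset.univ.filter (fun v : C => (v : Fin n → F) i = 0)).card := by
      rw [← Fintype.card_subtype]
      exact Fintype.card_congr
        (Equiv.subtypeEquivRight (fun v => by simp [f, LinearMap.mem_ker]))
    have hsplit := Finset.card_filter_add_card_filter_not
      (s := (Finset.univ : Finset C)) (p := fun v : C => (v : Fin n → F) i = 0)
    rw [Finset.card_univ, hcard] at hsplit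
    simp only [ne_eq]
    omega
  -- total sum upper bound
  have hsum : ∑ v : C, wt (v : Fin n → F) ≤ n * (q ^ k - q ^ (k - 1)) := by
    have h1 : ∑ v : C, wt (v : Fin n → F)
        = ∑ i : Fin n, (Finset.univ.filter (fun v : C => (v : Fin n → F) i ≠ 0)).card := by
      simp_rw [hwt, Finset.card_filter]
      rw [Finset.sum_comm]
    rw [h1]
    calc ∑ i : Fin n, (Finset.univ.filter (fun v : C => (v : Fin n → F) i ≠ 0)).card
        ≤ ∑ _i : Fin n, (q ^ k - q ^ (k - 1)) := Finset.sum_le_sum (fun i _ => hcoord i)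
      _ = n * (q ^ k - q ^ (k - 1)) := by simp [mul_comm]
  -- arithmetic identity
  have hnval : n * (q ^ k - q ^ (k - 1)) = d * (q ^ k - 1) := by
    have hgb : gbound q k d = ∑ i ∈ Finset.range k, d / q ^ i := by
      apply Finset.sum_congr rfl
      intro i hi
      rw [Finset.mem_range] at hi
      have hdvd : q ^ i ∣ d := dvd_trans (pow_dvd_pow q (by omega : i ≤ k - 1)) hd
      obtain ⟨m, hm⟩ := hdvd
      have hqi : 0 < q ^ i := Nat.pow_pos (by omega)
      subst hm
      rw [Nat.mul_div_cancel_left _ hqi]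
      have h1 : q ^ i * m + q ^ i - 1 = q ^ i * m + (q ^ i - 1) := by omega
      rw [h1, Nat.mul_add_div hqi, Nat.div_eq_of_lt (by omega)]
      simp
    have hpow : q ^ k - q ^ (k - 1) = q ^ (k - 1) * (q - 1) := by
      have h1 : q ^ k = q ^ (k - 1) * q := by
        rw [← pow_succ]
        congr 1
        omega
      have h2 : q ^ (k - 1) * (q - 1) = q ^ (k - 1) * q - q ^ (k - 1) := by
        rw [Nat.mul_sub_left_distrib, mul_one]
      omega
    rw [hn, hgb, hpow, Finset.sum_mul]
    have hterm : ∀ i ∈ Finset.range k,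
        d / q ^ i * (q ^ (k - 1) * (q - 1)) = d * (q ^ (k - 1 - i) * (q - 1)) := by
      intro i hi
      rw [Finset.mem_range] at hi
      have hdvd : q ^ i ∣ d := dvd_trans (pow_dvd_pow q (by omega : i ≤ k - 1)) hd
      have h1 : q ^ (k - 1) = q ^ i * q ^ (k - 1 - i) := by
        rw [← pow_add]
        congr 1
        omega
      rw [h1, ← mul_assoc, ← mul_assoc, Nat.div_mul_cancel hdvd, mul_assoc]
    rw [Finset.sum_congr rfl hterm, ← Finset.mul_sum]
    congr 1
    have hrefl := Finset.sum_range_reflect (fun j => q ^ j * (q - 1)) k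
    have : ∀ j ∈ Finset.range k, q ^ (k - 1 - j) * (q - 1)
        = (fun j => q ^ j * (q - 1)) (k - 1 - j) := fun j _ => rfl
    rw [Finset.sum_congr rfl this, hrefl, geom_nat q k (by omega)]
  -- final argument
  intro c hc hc0
  by_contra hne
  have hgt : d < wt c := lt_of_le_of_ne (hmin c hc hc0) (Ne.symm hne)
  set T : Finset C := Finset.univ.filter (fun v : C => v ≠ 0) with hT
  have hTcard : T.card = q ^ k - 1 := by
    have hsplit := Finset.card_filter_add_card_filter_not
      (s := (Finset.univ : Finset C)) (p := fun v : C => v = 0)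
    rw [Finset.card_univ, hcard] at hsplit
    have h0 : (Finset.univ.filter (fun v : C => v = 0)).card = 1 := by
      rw [Finset.filter_eq', if_pos (Finset.mem_univ _)]
      simp
    have hTe : T = Finset.univ.filter (fun v : C => ¬ v = 0) := rfl
    rw [hTe]
    omega
  have hsumT : ∑ v : C, wt (v : Fin n → F) = ∑ v ∈ T, wt (v : Fin n → F) := by
    symm
    apply Finset.sum_subset (Finset.subset_univ T)
    intro v _ hvT
    have hv0 : v = 0 := by
      by_contra h
      exact hvT (Finset.mem_filter.mpr ⟨Finset.mem_univ v, h⟩)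
    rw [hv0]
    rw [hwt]
    simp
  have hcT : (⟨c, hc⟩ : C) ∈ T := by
    refine Finset.mem_filter.mpr ⟨Finset.mem_univ _, ?_⟩
    intro h
    exact hc0 (congrArg Subtype.val h)
  have hstrict : ∑ v ∈ T, (d : ℕ) < ∑ v ∈ T, wt (v : Fin n → F) := by
    apply Finset.sum_lt_sum
    · intro v hv
      exact hmin v v.2 (fun h => (Finset.mem_filter.mp hv).2 (Subtype.ext h))
    · exact ⟨⟨c, hc⟩, hcT, hgt⟩
  rw [Finset.sum_const, hTcard, smul_eq_mul] at hstrict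
  have : d * (q ^ k - 1) < n * (q ^ k - q ^ (k - 1)) := by
    calc d * (q ^ k - 1) = (q ^ k - 1) * d := mul_comm _ _
      _ < ∑ v ∈ T, wt (v : Fin n → F) := hstrict
      _ = ∑ v : C, wt (v : Fin n → F) := hsumT.symm
      _ ≤ n * (q ^ k - q ^ (k - 1)) := hsum
  omega
end

section
/- Let p be prime, q = p^f, and n a positive integer with n ≥ 1. Then for 1 ≤ k ≤ q−1, the sum c(q−1,k;1) := Σ_{i ≥ 0, i ≡ k (mod q−1), 1 ≤ i ≤ (q−1)q} C((q−1)q, i) has p-adic valuation 0, i.e., is not divisible by p. -/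
section aux

variable {p : ℕ} [Fact p.Prime]

lemma aux_choose_p_sub_one (d : ℕ) (hd : d ≤ p - 1) :
    (((p - 1).choose d : ℕ) : ZMod p) = (-1) ^ d := by
  induction d with
  | zero => simp
  | succ d ih =>
    have hp := (Fact.out : p.Prime)
    have hp1 : 1 ≤ p := hp.one_lt.le
    have hd' : d ≤ p - 1 := Nat.le_of_succ_le hd
    have hpascal : p.choose (d + 1) = (p - 1).choose d + (p - 1).choose (d + 1) := by
      have h := Nat.choose_succ_succ (p - 1) d
      rw [← h]
      congr 1
      omega
    have hdvd : p ∣ p.choose (d + 1) :=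
      hp.dvd_choose_self (Nat.succ_ne_zero d) (by omega)
    have h0 : ((p.choose (d + 1) : ℕ) : ZMod p) = 0 :=
      (ZMod.natCast_eq_zero_iff _ _).mpr hdvd
    rw [hpascal] at h0
    push_cast at h0
    rw [ih hd'] at h0
    have h1 : (((p - 1).choose (d + 1) : ℕ) : ZMod p) = -(-1) ^ d := by
      linear_combination h0
    rw [h1, pow_succ]
    ring

lemma aux_choose_pow_sub_one (f m : ℕ) (hm : m ≤ p ^ f - 1) :
    (((p ^ f - 1).choose m : ℕ) : ZMod p) ≠ 0 := by
  induction f generalizing m with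
  | zero =>
    simp at hm
    subst hm
    simp
  | succ f ih =>
    have hp := (Fact.out : p.Prime)
    have hp1 : 1 < p := hp.one_lt
    have hq : 1 ≤ p ^ f := Nat.one_le_pow _ _ hp.pos
    have hsplit : p ^ (f + 1) - 1 = (p - 1) + p * (p ^ f - 1) := by
      have hps : p ^ (f + 1) = p * p ^ f := by rw [pow_succ']
      have h1 : p ≤ p * p ^ f := Nat.le_mul_of_pos_right p hq
      rw [hps, Nat.mul_sub, mul_one]
      omega
    have hmod : (p ^ (f + 1) - 1) % p = p - 1 := by
      rw [hsplit, Nat.add_mul_mod_self_left, Nat.mod_eq_of_lt (by omega)]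
    have hdivq : (p ^ (f + 1) - 1) / p = p ^ f - 1 := by
      rw [hsplit, Nat.add_mul_div_left _ _ hp.pos, Nat.div_eq_of_lt (by omega)]
      omega
    have hstep := Choose.choose_modEq_choose_mod_mul_choose_div_nat
      (p := p) (n := p ^ (f + 1) - 1) (k := m)
    have hcast : (((p ^ (f + 1) - 1).choose m : ℕ) : ZMod p) =
        ((((p ^ (f + 1) - 1) % p).choose (m % p) *
          ((p ^ (f + 1) - 1) / p).choose (m / p) : ℕ) : ZMod p) :=
      (ZMod.natCast_eq_natCast_iff _ _ _).mpr hstep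
    rw [hcast, hmod, hdivq]
    push_cast
    apply mul_ne_zero
    · rw [aux_choose_p_sub_one (m % p) (by have := Nat.mod_lt m hp.pos; omega)]
      intro h
      have h2 : ((-1 : ZMod p) ^ (m % p)) ^ 2 = 0 := by rw [h]; ring
      rw [← pow_mul, mul_comm, pow_mul] at h2
      simp at h2
    · apply ih
      have h3 := Nat.div_le_div_right (c := p) hm
      rw [hdivq] at h3
      exact h3

lemma aux_lucas_pow (f a : ℕ) : ∀ i : ℕ,
    (((p ^ f * a).choose i : ℕ) : ZMod p) =
      if p ^ f ∣ i then ((a.choose (i / p ^ f) : ℕ) : ZMod p) else 0 := by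
  induction f with
  | zero => intro i; simp
  | succ f ih =>
    intro i
    have hp := (Fact.out : p.Prime)
    have hrw : p ^ (f + 1) * a = p * (p ^ f * a) := by ring
    have hmod : (p ^ (f + 1) * a) % p = 0 := by
      rw [hrw]; exact Nat.mul_mod_right _ _
    have hdiv : (p ^ (f + 1) * a) / p = p ^ f * a := by
      rw [hrw]; exact Nat.mul_div_cancel_left _ hp.pos
    have hstep := Choose.choose_modEq_choose_mod_mul_choose_div_nat
      (p := p) (n := p ^ (f + 1) * a) (k := i)
    have hcast : (((p ^ (f + 1) * a).choose i : ℕ) : ZMod p) =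
        ((((p ^ (f + 1) * a) % p).choose (i % p) *
          ((p ^ (f + 1) * a) / p).choose (i / p) : ℕ) : ZMod p) :=
      (ZMod.natCast_eq_natCast_iff _ _ _).mpr hstep
    rw [hcast, hmod, hdiv]
    push_cast
    by_cases hpi : p ∣ i
    · obtain ⟨c, rfl⟩ := hpi
      have h1 : (p * c) % p = 0 := Nat.mul_mod_right p c
      have hc : (p * c) / p = c := Nat.mul_div_cancel_left c hp.pos
      rw [h1, Nat.choose_self, Nat.cast_one, one_mul, hc, ih c]
      have hiff : p ^ f ∣ c ↔ p ^ (f + 1) ∣ p * c := by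
        rw [pow_succ']
        exact (Nat.mul_dvd_mul_iff_left hp.pos).symm
      have hdd : c / p ^ f = (p * c) / p ^ (f + 1) := by
        rw [pow_succ', Nat.mul_div_mul_left _ _ hp.pos]
      rw [hdd]
      by_cases h2 : p ^ (f + 1) ∣ p * c
      · rw [if_pos (hiff.mpr h2), if_pos h2]
      · rw [if_neg (fun h => h2 (hiff.mp h)), if_neg h2]
    · have h1 : i % p ≠ 0 := fun h => hpi (Nat.dvd_of_mod_eq_zero h)
      have h2 : Nat.choose 0 (i % p) = 0 :=
        Nat.choose_eq_zero_of_lt (Nat.pos_of_ne_zero h1)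
      have h3 : ¬ p ^ (f + 1) ∣ i := fun h =>
        hpi (dvd_trans (dvd_pow_self p (Nat.succ_ne_zero f)) h)
      rw [h2, if_neg h3, Nat.cast_zero, zero_mul]

end aux

lemma aux_uniq {r m k : ℕ} (h1 : 1 ≤ m) (h2 : m ≤ r) (h3 : 1 ≤ k) (h4 : k ≤ r)
    (h : m % r = k % r) : m = k := by
  have hmm : m % r = if m < r then m else 0 := by
    split_ifs with h'
    · exact Nat.mod_eq_of_lt h'
    · rw [show m = r by omega, Nat.mod_self]
  have hkk : k % r = if k < r then k else 0 := by
    split_ifs with h'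
    · exact Nat.mod_eq_of_lt h'
    · rw [show k = r by omega, Nat.mod_self]
  rw [hmm, hkk] at h
  split_ifs at h; all_goals omega

theorem stmt13 {p f : ℕ} (hp : p.Prime) (hf : 1 ≤ f) {k : ℕ}
    (hk1 : 1 ≤ k) (hk2 : k ≤ p ^ f - 1) :
    ¬ p ∣ ∑ i ∈ (Finset.Icc 1 ((p ^ f - 1) * p ^ f)).filter
        (fun i => i % (p ^ f - 1) = k % (p ^ f - 1)),
      ((p ^ f - 1) * p ^ f).choose i := by
  haveI : Fact p.Prime := ⟨hp⟩
  set q := p ^ f with hqdef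
  set r := q - 1 with hrdef
  have hq2 : 2 ≤ q := by
    calc 2 ≤ p := hp.two_le
    _ = p ^ 1 := (pow_one p).symm
    _ ≤ p ^ f := Nat.pow_le_pow_right hp.pos hf
  have hq1 : q = r + 1 := by omega
  have hr1 : 1 ≤ r := by omega
  intro hdvd
  have h0 : ((∑ i ∈ (Finset.Icc 1 (r * q)).filter (fun i => i % r = k % r),
      (r * q).choose i : ℕ) : ZMod p) = 0 :=
    (ZMod.natCast_eq_zero_iff _ _).mpr hdvd
  rw [Nat.cast_sum] at h0
  have hterm : ∀ i ∈ (Finset.Icc 1 (r * q)).filter (fun i => i % r = k % r),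
      (((r * q).choose i : ℕ) : ZMod p) =
        if q ∣ i then ((r.choose (i / q) : ℕ) : ZMod p) else 0 := by
    intro i _
    rw [mul_comm r q]
    exact aux_lucas_pow f r i
  rw [Finset.sum_congr rfl hterm] at h0
  have hmem : q * k ∈ (Finset.Icc 1 (r * q)).filter (fun i => i % r = k % r) := by
    rw [Finset.mem_filter, Finset.mem_Icc]
    refine ⟨⟨?_, ?_⟩, ?_⟩
    · calc 1 = 1 * 1 := (one_mul 1).symm
      _ ≤ q * k := Nat.mul_le_mul (by omega) hk1
    · rw [mul_comm]
      exact Nat.mul_le_mul_right q hk2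
    · have : q * k = k + r * k := by rw [hq1]; ring
      rw [this, Nat.add_mul_mod_self_left]
  have hsingle := Finset.sum_eq_single (s := (Finset.Icc 1 (r * q)).filter
      (fun i => i % r = k % r))
      (f := fun i => if q ∣ i then ((r.choose (i / q) : ℕ) : ZMod p) else 0) (q * k)
      (fun i hi hne => by
        rw [if_neg]
        intro hqd
        obtain ⟨m, rfl⟩ := hqd
        rw [Finset.mem_filter, Finset.mem_Icc] at hi
        obtain ⟨⟨him1, him2⟩, himod⟩ := hi
        have hm1 : 1 ≤ m := by
          by_contra h
          push_neg at h
          interval_cases m <;> omega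
        have hm2 : m ≤ r := by
          rw [mul_comm r q] at him2
          exact Nat.le_of_mul_le_mul_left him2 (by omega)
        have hqm : (q * m) % r = m % r := by
          have : q * m = m + r * m := by rw [hq1]; ring
          rw [this, Nat.add_mul_mod_self_left]
        rw [hqm] at himod
        exact hne (by rw [aux_uniq hm1 hm2 hk1 hk2 himod]))
      (fun h => absurd hmem h)
  rw [hsingle] at h0
  simp only [dvd_mul_right, if_pos, Nat.mul_div_cancel_left k (show 0 < q by omega)] at h0
  exact aux_choose_pow_sub_one f k hk2 h0
end

section
/- Let p be prime, q = p^f, let 0 ≤ j ≤ f−1 and 0 ≤ r ≤ q−1−p^j. Then the p-adic valuation of the sum c(r+p^j, p^j; 1) := Σ_{a=0}^{q−1} C((r+p^j)q, a(q−1)+p^j) equals the p-adic valuation of C(r+p^j, p^j). -/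
section Aux

variable {p : ℕ}

/-- Digit sums are subadditive. -/
private lemma dsum_add_le [hpf : Fact p.Prime] (n k : ℕ) :
    (p.digits (n + k)).sum ≤ (p.digits n).sum + (p.digits k).sum := by
  have hfac : (n + k).choose k * k.factorial * n.factorial = (n + k).factorial := by
    simpa using Nat.choose_mul_factorial_mul_factorial (Nat.le_add_left k n)
  have hval : padicValNat p ((n + k).factorial) =
      padicValNat p ((n + k).choose k) + padicValNat p k.factorial
        + padicValNat p n.factorial := by
    rw [← hfac, padicValNat.mul (Nat.mul_ne_zero (Nat.choose_pos (Nat.le_add_left k n)).ne'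
      (Nat.factorial_ne_zero k)) (Nat.factorial_ne_zero n),
      padicValNat.mul (Nat.choose_pos (Nat.le_add_left k n)).ne' (Nat.factorial_ne_zero k)]
  have hmul := congrArg (fun x => (p - 1) * x) hval
  simp only [Nat.mul_add] at hmul
  rw [sub_one_mul_padicValNat_factorial (n + k), sub_one_mul_padicValNat_factorial n,
    sub_one_mul_padicValNat_factorial k] at hmul
  have h1 := Nat.digit_sum_le p (n + k)
  have h2 := Nat.digit_sum_le p n
  have h3 := Nat.digit_sum_le p k
  omega

/-- Exact (non-truncated) Kummer digit-sum identity. -/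
private lemma dvs [hpf : Fact p.Prime] (n k : ℕ) :
    (p - 1) * padicValNat p ((n + k).choose k) + (p.digits (n + k)).sum =
      (p.digits k).sum + (p.digits n).sum := by
  have h := sub_one_mul_padicValNat_choose_eq_sub_sum_digits' (p := p) (k := k) (n := n)
  have h2 := dsum_add_le (p := p) n k
  omega

private lemma ds_pow_mul (hp : 1 < p) (k x : ℕ) :
    (p.digits (p ^ k * x)).sum = (p.digits x).sum := by
  rcases Nat.eq_zero_or_pos x with rfl | hx
  · simp
  · rw [Nat.digits_base_pow_mul hp hx]
    simp

private lemma ds_one (hp : 1 < p) : (p.digits 1).sum = 1 := by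
  rw [Nat.digits_def' hp Nat.one_pos, Nat.mod_eq_of_lt hp, Nat.div_eq_of_lt hp]
  simp

private lemma ds_pow (hp : 1 < p) (k : ℕ) : (p.digits (p ^ k)).sum = 1 := by
  rw [show p ^ k = p ^ k * 1 by ring, ds_pow_mul hp, ds_one hp]

private lemma ds_split (hp : 1 < p) {u k : ℕ} (x : ℕ) (hu : u < p ^ k) :
    (p.digits (p ^ k * x + u)).sum = (p.digits x).sum + (p.digits u).sum := by
  rcases Nat.eq_zero_or_pos x with rfl | hx
  · simp
  have hlen : (p.digits u).length ≤ k := by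
    rcases Nat.eq_zero_or_pos u with rfl | hu0
    · simp
    · have hlog := Nat.log_lt_of_lt_pow hu0.ne' hu
      rw [Nat.digits_len p u hp hu0.ne']
      omega
  have h := Nat.digits_append_zeroes_append_digits (b := p)
    (k := k - (p.digits u).length) (m := x) (n := u) hp hx
  rw [show (p.digits u).length + (k - (p.digits u).length) = k from by omega] at h
  rw [show p ^ k * x + u = u + p ^ k * x from by ring, ← h]
  simp [List.sum_append, Nat.add_comm]

private lemma val_p_choose_pow [hpf : Fact p.Prime] {u f : ℕ} (hu0 : u ≠ 0) (hu : u ≤ p ^ f) :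
    padicValNat p ((p ^ f).choose u) + padicValNat p u = f := by
  have hp := Fact.out (p := p.Prime)
  have h := Nat.Prime.emultiplicity_choose_prime_pow_add_emultiplicity hp hu hu0
  rw [← padicValNat_eq_emultiplicity (Nat.choose_pos hu).ne',
    ← padicValNat_eq_emultiplicity hu0] at h
  exact_mod_cast h

private lemma ds_compl [hpf : Fact p.Prime] {u f : ℕ} (hu0 : 0 < u) (hu : u < p ^ f) :
    (p.digits u).sum + (p.digits (p ^ f - u)).sum + (p - 1) * padicValNat p u
      = (p - 1) * f + 1 := by
  have hp := Fact.out (p := p.Prime)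
  have h := dvs (p := p) (p ^ f - u) u
  rw [Nat.sub_add_cancel hu.le] at h
  have h2 := val_p_choose_pow (p := p) hu0.ne' hu.le
  have h4 : (p - 1) * padicValNat p ((p ^ f).choose u) + (p - 1) * padicValNat p u
      = (p - 1) * f := by rw [← Nat.mul_add, h2]
  have h3 := ds_pow hp.one_lt f
  omega

private lemma ds_pred_pow (hp : 1 < p) (j : ℕ) :
    (p.digits (p ^ j - 1)).sum = j * (p - 1) := by
  induction j with
  | zero => simp
  | succ j ih =>
    have hpj : 1 ≤ p ^ j := Nat.one_le_pow _ _ (by omega)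
    have hkey : p ^ (j + 1) - 1 = p * (p ^ j - 1) + (p - 1) := by
      have h1 : p ^ (j + 1) = p * p ^ j := by ring
      have h2 : p * (p ^ j - 1) + p = p * p ^ j := by
        obtain ⟨w, hw⟩ := Nat.exists_eq_add_of_le hpj
        rw [hw, Nat.add_sub_cancel_left]
        ring
      omega
    have hx : 0 < p ^ (j + 1) - 1 := by
      have : p ^ j < p ^ (j + 1) := Nat.pow_lt_pow_right hp (Nat.lt_succ_self j)
      omega
    rw [Nat.digits_def' hp hx]
    have hmod : (p ^ (j + 1) - 1) % p = p - 1 := by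
      rw [hkey, Nat.mul_add_mod]
      exact Nat.mod_eq_of_lt (by omega)
    have hdiv : (p ^ (j + 1) - 1) / p = p ^ j - 1 := by
      rw [hkey, Nat.mul_add_div (by omega), Nat.div_eq_of_lt (by omega), Nat.add_zero]
    rw [hmod, hdiv, List.sum_cons, ih]
    ring_nf

private lemma t_le [hpf : Fact p.Prime] {f j r : ℕ} (hj : j + 1 ≤ f) (hn : r + p ^ j < p ^ f) :
    padicValNat p ((r + p ^ j).choose (p ^ j)) + (j + 1) ≤ f := by
  have hp := Fact.out (p := p.Prime)
  have hn0 : r + p ^ j ≠ 0 := by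
    have : 1 ≤ p ^ j := Nat.one_le_pow _ _ hp.pos
    omega
  have hlog : Nat.log p (r + p ^ j) < f := Nat.log_lt_of_lt_pow hn0 hn
  rw [padicValNat_choose (Nat.le_add_left _ _) hlog]
  have hsub : ((Finset.Ico 1 f).filter
      fun i => p ^ i ≤ p ^ j % p ^ i + ((r + p ^ j) - p ^ j) % p ^ i) ⊆
      Finset.Ico (j + 1) f := by
    intro i hi
    simp only [Finset.mem_filter, Finset.mem_Ico] at hi ⊢
    obtain ⟨⟨h1, h2⟩, h3⟩ := hi
    refine ⟨?_, h2⟩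
    by_contra hij
    push_neg at hij
    have hdvd : p ^ i ∣ p ^ j := pow_dvd_pow p (by omega)
    have hz : p ^ j % p ^ i = 0 := Nat.dvd_iff_mod_eq_zero.mp hdvd
    have hrlt : ((r + p ^ j) - p ^ j) % p ^ i < p ^ i :=
      Nat.mod_lt _ (pow_pos hp.pos i)
    omega
  have hcard := Finset.card_le_card hsub
  rw [Nat.card_Ico] at hcard
  omega

private lemma mul_sub_one_add {x q : ℕ} (hq : 1 ≤ q) : x * (q - 1) + x = x * q := by
  obtain ⟨w, rfl⟩ := Nat.exists_eq_add_of_le hq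
  rw [Nat.add_sub_cancel_left]
  ring

private lemma term_val [hpf : Fact p.Prime] (f j r : ℕ) :
    padicValNat p (((r + p ^ j) * p ^ f).choose (p ^ j * p ^ f)) =
      padicValNat p ((r + p ^ j).choose (p ^ j)) := by
  have hp := Fact.out (p := p.Prime)
  have h1 := dvs (p := p) (r * p ^ f) (p ^ j * p ^ f)
  have e1 : r * p ^ f + p ^ j * p ^ f = (r + p ^ j) * p ^ f := by ring
  rw [e1] at h1
  have e2 : (p.digits ((r + p ^ j) * p ^ f)).sum = (p.digits (r + p ^ j)).sum := by
    rw [mul_comm]; exact ds_pow_mul hp.one_lt _ _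
  have e3 : (p.digits (p ^ j * p ^ f)).sum = 1 := by
    rw [mul_comm, ds_pow_mul hp.one_lt]; exact ds_pow hp.one_lt j
  have e4 : (p.digits (r * p ^ f)).sum = (p.digits r).sum := by
    rw [mul_comm]; exact ds_pow_mul hp.one_lt _ _
  rw [e2, e3, e4] at h1
  have h2 := dvs (p := p) r (p ^ j)
  rw [ds_pow hp.one_lt j] at h2
  refine Nat.eq_of_mul_eq_mul_left (show 0 < p - 1 by have := hp.two_le; omega) ?_
  omega

private lemma main_dvd [hpf : Fact p.Prime] {f j r a : ℕ} (hj : j + 1 ≤ f)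
    (hr : r + p ^ j ≤ p ^ f - 1) (ha : a < p ^ f) (hane : a ≠ p ^ j) :
    p ^ (padicValNat p ((r + p ^ j).choose (p ^ j)) + 1) ∣
      ((r + p ^ j) * p ^ f).choose (a * (p ^ f - 1) + p ^ j) := by
  have hp := Fact.out (p := p.Prime)
  have hp1 : 1 < p := hp.one_lt
  have hP0 : 0 < p - 1 := by omega
  have hq1 : 1 ≤ p ^ f := Nat.one_le_pow _ _ hp.pos
  have hpj1 : 1 ≤ p ^ j := Nat.one_le_pow _ _ hp.pos
  have hpjq : p ^ j < p ^ f := Nat.pow_lt_pow_right hp1 (by omega)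
  set t := padicValNat p ((r + p ^ j).choose (p ^ j)) with ht
  have htle : t + (j + 1) ≤ f := t_le hj (by omega)
  by_cases hmn : (r + p ^ j) * p ^ f < a * (p ^ f - 1) + p ^ j
  · rw [Nat.choose_eq_zero_of_lt hmn]; exact dvd_zero _
  push_neg at hmn
  have hmul : a * (p ^ f - 1) + a = a * p ^ f := mul_sub_one_add hq1
  obtain ⟨A, u, hAu, hu0, huq, hkey⟩ :
      ∃ A u, a * (p ^ f - 1) + p ^ j = p ^ f * A + u ∧ 0 < u ∧ u < p ^ f ∧
        (A + u = p ^ j ∨ A + u = (p ^ f - 1) + p ^ j) := by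
    rcases Nat.lt_or_ge a (p ^ j) with h | h
    · refine ⟨a, p ^ j - a, ?_, by omega, by omega, Or.inl (by omega)⟩
      have hcm : p ^ f * a = a * p ^ f := mul_comm _ _
      omega
    · have h' : p ^ j < a := by omega
      obtain ⟨c, hc⟩ : ∃ c, a = (p ^ j + 1) + c := ⟨a - p ^ j - 1, by omega⟩
      obtain ⟨u, hu⟩ : ∃ u, p ^ f = (c + 1) + u := ⟨p ^ f - (c + 1), by omega⟩
      refine ⟨p ^ j + c, u, ?_, by omega, by omega, Or.inr (by omega)⟩
      have h2 : p ^ f - 1 = c + u := by omega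
      rw [hc, h2, hu]
      ring
  rw [hAu] at hmn ⊢
  have hAlt : A < r + p ^ j := by
    by_contra hA
    push_neg at hA
    have hmm : (r + p ^ j) * p ^ f ≤ A * p ^ f := Nat.mul_le_mul_right _ hA
    have hcm : A * p ^ f = p ^ f * A := mul_comm _ _
    omega
  obtain ⟨B, hB⟩ : ∃ B, r + p ^ j = (A + B) + 1 := ⟨r + p ^ j - A - 1, by omega⟩
  obtain ⟨w, hwdef⟩ : ∃ w, p ^ f = u + w := ⟨p ^ f - u, by omega⟩
  have hw0 : 0 < w := by omega
  have hdecomp : (r + p ^ j) * p ^ f = (p ^ f * B + w) + (p ^ f * A + u) := by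
    rw [hB, hwdef]
    ring
  have hstar := dvs (p := p) (p ^ f * B + w) (p ^ f * A + u)
  rw [← hdecomp] at hstar
  have e1 : (p.digits ((r + p ^ j) * p ^ f)).sum = (p.digits (r + p ^ j)).sum := by
    rw [mul_comm]; exact ds_pow_mul hp1 _ _
  have e2 : (p.digits (p ^ f * A + u)).sum = (p.digits A).sum + (p.digits u).sum :=
    ds_split hp1 A huq
  have e3 : (p.digits (p ^ f * B + w)).sum = (p.digits B).sum + (p.digits w).sum :=
    ds_split hp1 B (by omega)
  rw [e1, e2, e3] at hstar
  set v := padicValNat p u with hv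
  have hpvu : p ^ v ∣ u := pow_padicValNat_dvd
  have hvf : v + 1 ≤ f := by
    have h2 : p ^ v ≤ u := Nat.le_of_dvd hu0 hpvu
    by_contra hcon
    push_neg at hcon
    have : p ^ f ≤ p ^ v := Nat.pow_le_pow_right hp.pos (by omega)
    omega
  have hcompl : (p.digits u).sum + (p.digits w).sum + (p - 1) * v = (p - 1) * f + 1 := by
    have h := ds_compl (p := p) hu0 huq
    rw [show p ^ f - u = w from by omega] at h
    exact h
  have hstar2 := dvs (p := p) r (p ^ j)
  rw [ds_pow hp1 j, ← ht] at hstar2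
  suffices hfin : t + 1 ≤ padicValNat p (((r + p ^ j) * p ^ f).choose (p ^ f * A + u)) by
    exact (pow_dvd_pow p hfin).trans pow_padicValNat_dvd
  refine Nat.le_of_mul_le_mul_left ?_ hP0
  rw [Nat.mul_add, Nat.mul_one]
  by_cases hcase : v + t + 1 ≤ f
  · have hPf : (p - 1) * (v + (t + 1)) ≤ (p - 1) * f := Nat.mul_le_mul_left _ (by omega)
    rw [Nat.mul_add, Nat.mul_add, Nat.mul_one] at hPf
    have hsub1 : (p.digits (A + (B + 1))).sum ≤ (p.digits A).sum + (p.digits (B + 1)).sum :=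
      dsum_add_le _ _
    have hsub2 : (p.digits (B + 1)).sum ≤ (p.digits B).sum + (p.digits 1).sum :=
      dsum_add_le _ _
    rw [show A + (B + 1) = r + p ^ j from by omega] at hsub1
    rw [ds_one hp1] at hsub2
    omega
  · push_neg at hcase
    have hvj : j + 1 ≤ v := by omega
    rcases hkey with hk | hk
    · exfalso
      have h1 : p ^ v ≤ u := Nat.le_of_dvd hu0 hpvu
      have h2 : p ^ (j + 1) ≤ p ^ v := Nat.pow_le_pow_right hp.pos hvj
      have h3 : p ^ j < p ^ (j + 1) := Nat.pow_lt_pow_right hp1 (Nat.lt_succ_self j)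
      omega
    · have hpvw : p ^ v ∣ w := by
        have hqd : p ^ v ∣ p ^ f := pow_dvd_pow p (by omega)
        rw [hwdef] at hqd
        exact (Nat.dvd_add_right hpvu).mp hqd
      obtain ⟨s, hs⟩ := hpvw
      obtain ⟨e, he⟩ : ∃ e, p ^ j = e + 1 := ⟨p ^ j - 1, by omega⟩
      have hpjv : p ^ j ≤ p ^ v := Nat.pow_le_pow_right hp.pos (by omega)
      have hA : A = p ^ v * s + e := by omega
      have hDA : (p.digits A).sum = (p.digits s).sum + (p.digits e).sum := by
        rw [hA]
        exact ds_split hp1 s (by omega)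
      have hDe : (p.digits e).sum = j * (p - 1) := by
        rw [show e = p ^ j - 1 from by omega]
        exact ds_pred_pow hp1 j
      have hrB : r = p ^ v * s + B := by omega
      have hDr : (p.digits r).sum ≤ (p.digits s).sum + (p.digits B).sum := by
        calc (p.digits r).sum = (p.digits (p ^ v * s + B)).sum := by rw [← hrB]
          _ ≤ (p.digits (p ^ v * s)).sum + (p.digits B).sum := dsum_add_le _ _
          _ = (p.digits s).sum + (p.digits B).sum := by rw [ds_pow_mul hp1]
      have hP1 : (p - 1) * (v + 1) ≤ (p - 1) * f := Nat.mul_le_mul_left _ hvf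
      rw [Nat.mul_add, Nat.mul_one] at hP1
      omega

end Aux

theorem stmt14 {p f : ℕ} (hp : p.Prime) (hf : 1 ≤ f) {j r : ℕ}
    (hj : j ≤ f - 1) (hr : r ≤ p ^ f - 1 - p ^ j) :
    padicValNat p
        (∑ a ∈ Finset.range (p ^ f),
          ((r + p ^ j) * p ^ f).choose (a * (p ^ f - 1) + p ^ j)) =
      padicValNat p ((r + p ^ j).choose (p ^ j)) := by
  haveI : Fact p.Prime := ⟨hp⟩
  have hp1 : 1 < p := hp.one_lt
  have hj' : j + 1 ≤ f := by omega
  have hq1 : 1 ≤ p ^ f := Nat.one_le_pow _ _ hp.pos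
  have hpj1 : 1 ≤ p ^ j := Nat.one_le_pow _ _ hp.pos
  have hpjq : p ^ j < p ^ f := Nat.pow_lt_pow_right hp1 (by omega)
  have hr' : r + p ^ j ≤ p ^ f - 1 := by omega
  set t := padicValNat p ((r + p ^ j).choose (p ^ j)) with ht
  set G : ℕ → ℕ := fun a => ((r + p ^ j) * p ^ f).choose (a * (p ^ f - 1) + p ^ j) with hG
  have hmem : p ^ j ∈ Finset.range (p ^ f) := Finset.mem_range.mpr hpjq
  have hsplit := Finset.add_sum_erase (Finset.range (p ^ f)) G hmem
  have hargs : p ^ j * (p ^ f - 1) + p ^ j = p ^ j * p ^ f := mul_sub_one_add hq1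
  have hval1 : padicValNat p (G (p ^ j)) = t := by
    rw [hG]
    simp only []
    rw [hargs]
    exact term_val f j r
  have hpos : 0 < G (p ^ j) := by
    rw [hG]
    simp only []
    rw [hargs]
    exact Nat.choose_pos (Nat.mul_le_mul_right _ (Nat.le_add_left _ _))
  have hdvd_rest : p ^ (t + 1) ∣ ∑ x ∈ (Finset.range (p ^ f)).erase (p ^ j), G x := by
    refine Finset.dvd_sum ?_
    intro x hx
    rw [Finset.mem_erase, Finset.mem_range] at hx
    exact main_dvd hj' hr' hx.2 hx.1
  rw [← hsplit]
  have hS0 : G (p ^ j) + ∑ x ∈ (Finset.range (p ^ f)).erase (p ^ j), G x ≠ 0 := by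
    intro hcon
    omega
  have hdvdt : p ^ t ∣ G (p ^ j) + ∑ x ∈ (Finset.range (p ^ f)).erase (p ^ j), G x := by
    refine Dvd.dvd.add ?_ ((pow_dvd_pow p (Nat.le_succ t)).trans hdvd_rest)
    rw [← hval1]
    exact pow_padicValNat_dvd
  have hnd : ¬ p ^ (t + 1) ∣ G (p ^ j) + ∑ x ∈ (Finset.range (p ^ f)).erase (p ^ j), G x := by
    intro hcon
    have hd : p ^ (t + 1) ∣ G (p ^ j) := by
      have heq : G (p ^ j) = (G (p ^ j) + ∑ x ∈ (Finset.range (p ^ f)).erase (p ^ j), G x)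
          - ∑ x ∈ (Finset.range (p ^ f)).erase (p ^ j), G x := by omega
      rw [heq]
      exact Nat.dvd_sub hcon hdvd_rest
    have hle := (Nat.Prime.pow_dvd_iff_le_factorization hp hpos.ne').mp hd
    rw [Nat.factorization_def _ hp, hval1] at hle
    omega
  have hle1 : t ≤ padicValNat p (G (p ^ j) + ∑ x ∈ (Finset.range (p ^ f)).erase (p ^ j), G x) := by
    have h := (Nat.Prime.pow_dvd_iff_le_factorization hp hS0).mp hdvdt
    rwa [Nat.factorization_def _ hp] at h
  have hle2 : padicValNat p (G (p ^ j) + ∑ x ∈ (Finset.range (p ^ f)).erase (p ^ j), G x) < t + 1 := by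
    by_contra hcon
    push_neg at hcon
    exact hnd ((pow_dvd_pow p hcon).trans pow_padicValNat_dvd)
  omega
end

section
/- Let p be prime and let x, y, z be nonnegative integers with z = x + y. Write x = x' + x'' and z = z' + z'' where p^n divides x' and z', and 0 ≤ x'', z'' ≤ p^n − 1. Suppose the base-p digits satisfy x_i ≥ z_i for all 1 ≤ i ≤ n−1 and x_0 > z_0, where x'' = Σ x_i p^i and z'' = Σ z_i p^i. Then ν_p(C(z,x)) ≥ n. -/
private lemma mod_pow_succ' (p i a : ℕ) :
    a % p ^ (i + 1) = p ^ i * (a / p ^ i % p) + a % p ^ i := by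
  conv_lhs => rw [pow_succ, ← Nat.div_add_mod (a % (p ^ i * p)) (p ^ i)]
  rw [Nat.mod_mul_right_div_self, Nat.mod_mod_of_dvd _ ⟨p, rfl⟩]

private lemma mod_of_split {p i a a' a'' : ℕ} (ha : a = a' + a'') (h : p ^ i ∣ a') :
    a % p ^ i = a'' % p ^ i := by
  obtain ⟨c, rfl⟩ := h
  subst ha
  simp [Nat.mul_add_mod]

theorem stmt15 {p : ℕ} (hp : p.Prime) {x y z x' x'' z' z'' n : ℕ}
    (hz : z = x + y) (hx : x = x' + x'') (hzz : z = z' + z'')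
    (hx' : p ^ n ∣ x') (hz' : p ^ n ∣ z')
    (hx'' : x'' ≤ p ^ n - 1) (hz'' : z'' ≤ p ^ n - 1)
    (hdig : ∀ i, 1 ≤ i → i ≤ n - 1 → (z'' / p ^ i) % p ≤ (x'' / p ^ i) % p)
    (h0 : z'' % p < x'' % p) :
    n ≤ padicValNat p (z.choose x) := by
  haveI : Fact p.Prime := ⟨hp⟩
  -- main digit lemma
  have key : ∀ i, 1 ≤ i → i ≤ n → z'' % p ^ i < x'' % p ^ i := by
    intro i h1 hn
    induction i with
    | zero => omega
    | succ j ih =>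
      rcases Nat.eq_zero_or_pos j with hj | hj
      · subst hj; simpa using h0
      · have hz2 := mod_pow_succ' p j z''
        have hx2 := mod_pow_succ' p j x''
        have hd := hdig j hj (by omega)
        have h3 := ih hj (by omega)
        have h4 := Nat.mul_le_mul_left (p ^ j) hd
        omega
  have hxz : x ≤ z := by omega
  -- carries in positions 1..n
  have carry : ∀ i ∈ Finset.Ico 1 (n + 1), p ^ i ≤ x % p ^ i + (z - x) % p ^ i := by
    intro i hi
    rw [Finset.mem_Ico] at hi
    have hin : i ≤ n := by omega
    have hdvd : p ^ i ∣ p ^ n := pow_dvd_pow p hin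
    have hxm : x % p ^ i = x'' % p ^ i := mod_of_split hx (hdvd.trans hx')
    have hzm : z % p ^ i = z'' % p ^ i := mod_of_split hzz (hdvd.trans hz')
    have hk := key i hi.1 hin
    by_contra hlt
    push_neg at hlt
    have hy : z - x = y := by omega
    rw [hy] at hlt
    have h5 : z % p ^ i = x % p ^ i + y % p ^ i := by
      rw [hz, Nat.add_mod, Nat.mod_eq_of_lt hlt]
    rw [hzm, hxm] at h5
    exact Nat.not_lt.mpr (h5 ▸ Nat.le_add_right _ _) hk
  -- apply Kummer
  set b := max (Nat.log p z + 1) (n + 1) with hb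
  rw [padicValNat_choose (p := p) hxz (b := b) (by omega)]
  calc n = (Finset.Ico 1 (n + 1)).card := by simp
    _ ≤ _ := by
      apply Finset.card_le_card
      intro i hi
      rw [Finset.mem_filter]
      rw [Finset.mem_Ico] at hi ⊢
      exact ⟨⟨hi.1, by omega⟩, carry i (Finset.mem_Ico.mpr hi)⟩
end
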